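/- Let G be a virtually cyclic group. Then G contains a finite normal subgroup F such that G/F is either trivial, infinite cyclic, or infinite dihedral. -/

import Mathlib

lemma sw_int_aux (Q : Type*) [Group Q] (a : Q) (ha : ¬ IsOfFinOrder a)
    (hgen : ∀ q : Q, q ∈ Subgroup.zpowers a) :
    Nonempty (Q ≃* Multiplicative ℤ) := by
  have hinj : Function.Injective (fun n : ℤ => a ^ n) :=
    injective_zpow_iff_not_isOfFinOrder.mpr ha
  have hbij : Function.Bijective (zpowersHom Q a) := by
    constructor
    · intro m n h
      simp only [zpowersHom_apply] at h
      exact Multiplicative.toAdd.injective (hinj h)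
    · intro q
      obtain ⟨k, hk⟩ := Subgroup.mem_zpowers_iff.mp (hgen q)
      exact ⟨Multiplicative.ofAdd k, hk⟩
  exact ⟨(MulEquiv.ofBijective (zpowersHom Q a) hbij).symm⟩


private def zi (i : ZMod 0) : ℤ := i

private lemma zi_add (i j : ZMod 0) : zi (i + j) = zi i + zi j := rfl
private lemma zi_sub (i j : ZMod 0) : zi (i - j) = zi i - zi j := rfl
private lemma zi_inj {i j : ZMod 0} (h : zi i = zi j) : i = j := h

lemma sw_dihedral_aux (Q : Type*) [Group Q] (a t : Q)
    (ha : ¬ IsOfFinOrder a)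
    (ht2 : t * t = 1)
    (hconj : t * a * t⁻¹ = a⁻¹)
    (htA : t ∉ Subgroup.zpowers a)
    (hcover : ∀ q : Q, q ∈ Subgroup.zpowers a ∨ t⁻¹ * q ∈ Subgroup.zpowers a) :
    Nonempty (Q ≃* DihedralGroup 0) := by
  have hinj : Function.Injective (fun n : ℤ => a ^ n) :=
    injective_zpow_iff_not_isOfFinOrder.mpr ha
  have hconjk : ∀ k : ℤ, t * a ^ k * t⁻¹ = a ^ (-k) := by
    intro k
    rw [← conj_zpow, hconj, ← zpow_neg_one, ← zpow_mul]
    ring_nf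
  have hcomm : ∀ k : ℤ, a ^ k * t = t * a ^ (-k) := by
    intro k
    have := hconjk (-k)
    rw [neg_neg] at this
    rw [← this]
    group
  -- the underlying function
  let f : DihedralGroup 0 → Q := fun x =>
    match x with
    | DihedralGroup.r i => a ^ zi i
    | DihedralGroup.sr i => t * a ^ zi i
  have hmul : ∀ x y : DihedralGroup 0, f (x * y) = f x * f y := by
    rintro (i | i) (j | j)
    · show a ^ zi (i + j) = a ^ zi i * a ^ zi j
      rw [zi_add, zpow_add]
    · show t * a ^ zi (j - i) = a ^ zi i * (t * a ^ zi j)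
      rw [← mul_assoc, hcomm (zi i), zi_sub, sub_eq_add_neg, add_comm, zpow_add, mul_assoc]
    · show t * a ^ zi (i + j) = t * a ^ zi i * a ^ zi j
      rw [zi_add, zpow_add, mul_assoc]
    · show a ^ zi (j - i) = t * a ^ zi i * (t * a ^ zi j)
      rw [mul_assoc, ← mul_assoc (a ^ zi i), hcomm (zi i), ← mul_assoc, ← mul_assoc, ht2,
        one_mul, zi_sub, sub_eq_add_neg, add_comm, zpow_add]
  let F : DihedralGroup 0 →* Q := MonoidHom.mk' f hmul
  have hFbij : Function.Bijective F := by
    constructor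
    · intro x y hxy
      match x, y with
      | DihedralGroup.r i, DihedralGroup.r j =>
        have h : a ^ zi i = a ^ zi j := hxy
        exact congrArg DihedralGroup.r (zi_inj (hinj h))
      | DihedralGroup.r i, DihedralGroup.sr j =>
        have h : a ^ zi i = t * a ^ zi j := hxy
        exact absurd ⟨zi i + -(zi j), by show a ^ (zi i + -(zi j)) = t; rw [zpow_add, h]; group⟩ htA
      | DihedralGroup.sr i, DihedralGroup.r j =>
        have h : t * a ^ zi i = a ^ zi j := hxy
        exact absurd ⟨zi j + -(zi i), by show a ^ (zi j + -(zi i)) = t; rw [zpow_add, ← h]; group⟩ htA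
      | DihedralGroup.sr i, DihedralGroup.sr j =>
        have h : t * a ^ zi i = t * a ^ zi j := hxy
        exact congrArg DihedralGroup.sr (zi_inj (hinj (mul_left_cancel h)))
    · intro q
      rcases hcover q with hq | hq
      · obtain ⟨k, hk⟩ := Subgroup.mem_zpowers_iff.mp hq
        exact ⟨DihedralGroup.r k, hk⟩
      · obtain ⟨k, hk⟩ := Subgroup.mem_zpowers_iff.mp hq
        refine ⟨DihedralGroup.sr k, ?_⟩
        show t * a ^ zi k = q
        have : zi k = k := rfl
        rw [this, hk]
        group
  exact ⟨(MulEquiv.ofBijective F hFbij).symm⟩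

/-- Scott–Wall: a virtually cyclic group `G` (one containing a cyclic subgroup
of finite index) has a finite normal subgroup `F` such that `G/F` is trivial,
infinite cyclic, or infinite dihedral (`DihedralGroup 0`). -/
theorem stmt_4 (G : Type*) [Group G]
    (hvc : ∃ H : Subgroup G, IsCyclic H ∧ H.FiniteIndex) :
    ∃ (F : Subgroup G) (_ : F.Normal), Finite F ∧
      (Subsingleton (G ⧸ F) ∨
        Nonempty ((G ⧸ F) ≃* Multiplicative ℤ) ∨
        Nonempty ((G ⧸ F) ≃* DihedralGroup 0)) := by
  classical
  by_cases hfin : Finite G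
  · exact ⟨⊤, inferInstance, inferInstance, Or.inl (QuotientGroup.subsingleton_quotient_top)⟩
  have hGinf : Infinite G := not_finite_iff_infinite.mp hfin
  obtain ⟨H, hHcyc, hHfi⟩ := hvc
  -- normal core
  set N : Subgroup G := H.normalCore with hNdef
  haveI : H.FiniteIndex := hHfi
  haveI hNfi : N.FiniteIndex := H.finiteIndex_normalCore
  haveI hNnorm : N.Normal := H.normalCore_normal
  haveI : IsCyclic H := hHcyc
  haveI hNcyc : IsCyclic N := Subgroup.isCyclic_of_le H.normalCore_le
  -- N is infinite
  haveI hNinf : Infinite N := by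
    by_contra hfinN
    haveI : Finite N := not_infinite_iff_finite.mp hfinN
    haveI : Finite (G ⧸ N) := inferInstance
    exact hfin (Finite.of_equiv _ (Subgroup.groupEquivQuotientProdSubgroup (s := N)).symm)
  -- generator z
  obtain ⟨z₀, hz₀⟩ := IsCyclic.exists_generator (α := N)
  set z : G := (z₀ : G) with hzdef
  have hzN : z ∈ N := z₀.2
  have hNzpow : Subgroup.zpowers z = N := by
    apply le_antisymm
    · rw [Subgroup.zpowers_le]; exact hzN
    · intro x hx
      obtain ⟨k, hk⟩ := Subgroup.mem_zpowers_iff.mp (hz₀ ⟨x, hx⟩)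
      exact ⟨k, by simpa [Subtype.ext_iff] using hk⟩
  have hzo : ¬ IsOfFinOrder z := by
    intro h
    have h0 : IsOfFinOrder z₀ := Submonoid.isOfFinOrder_coe.mp h
    have h2 : (Subgroup.zpowers z₀ : Set N).Finite := finite_zpowers.mpr h0
    have h3 : Subgroup.zpowers z₀ = (⊤ : Subgroup N) := by
      rw [eq_top_iff]; intro x _; exact hz₀ x
    rw [h3] at h2
    exact Set.infinite_univ (by simpa using h2)
  have hzinj : Function.Injective (fun n : ℤ => z ^ n) :=
    injective_zpow_iff_not_isOfFinOrder.mpr hzo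
  -- dichotomy
  have hdich : ∀ g : G, g * z * g⁻¹ = z ∨ g * z * g⁻¹ = z⁻¹ := by
    intro g
    obtain ⟨k, hk⟩ := Subgroup.mem_zpowers_iff.mp
      (hNzpow ▸ hNnorm.conj_mem z hzN g : g * z * g⁻¹ ∈ Subgroup.zpowers z)
    obtain ⟨l, hl⟩ := Subgroup.mem_zpowers_iff.mp
      (hNzpow ▸ hNnorm.conj_mem z hzN g⁻¹ : g⁻¹ * z * g⁻¹⁻¹ ∈ Subgroup.zpowers z)
    have hlk : z ^ (l * k) = z ^ (1 : ℤ) := by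
      rw [zpow_mul, hl, conj_zpow, hk]
      group
    have : l * k = 1 := hzinj hlk
    rcases Int.isUnit_iff.mp (IsUnit.of_mul_eq_one (a := k) l (by rw [mul_comm]; exact this)) with h1 | h1
    · left; rw [← hk, h1, zpow_one]
    · right; rw [← hk, h1, zpow_neg_one]
  -- the centralizer K of z
  set K : Subgroup G := Subgroup.centralizer {z} with hKdef
  have hmemK : ∀ g : G, g ∈ K ↔ g * z * g⁻¹ = z := by
    intro g
    rw [Subgroup.mem_centralizer_singleton_iff, mul_inv_eq_iff_eq_mul]
  have hnotK : ∀ g : G, g ∉ K → g * z * g⁻¹ = z⁻¹ := by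
    intro g hg
    rcases hdich g with h | h
    · exact absurd ((hmemK g).mpr h) hg
    · exact h
  have hzK : z ∈ K := (hmemK z).mpr (by group)
  have hNK : N ≤ K := by
    intro x hx
    obtain ⟨k, hk⟩ := Subgroup.mem_zpowers_iff.mp (hNzpow ▸ hx : x ∈ Subgroup.zpowers z)
    rw [Subgroup.mem_centralizer_singleton_iff, ← hk, ← zpow_one_add, ← zpow_add_one]
    ring_nf
  haveI hKnorm : K.Normal := by
    constructor
    intro k hk g
    have hkz : k * z = z * k := Subgroup.mem_centralizer_singleton_iff.mp hk
    rcases hdich g⁻¹ with h | h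
    · have hgK : g ∈ K := K.inv_mem_iff.mp ((hmemK g⁻¹).mpr h)
      exact K.mul_mem (K.mul_mem hgK hk) (K.inv_mem hgK)
    · have hkzi : k * z⁻¹ = z⁻¹ * k := (show Commute k z from hkz).inv_right
      have h2 : g * z⁻¹ * g⁻¹ = z := by rw [← h]; group
      rw [hmemK]
      calc g * k * g⁻¹ * z * (g * k * g⁻¹)⁻¹
          = g * (k * (g⁻¹ * z * g⁻¹⁻¹) * k⁻¹) * g⁻¹ := by group
        _ = g * (k * z⁻¹ * k⁻¹) * g⁻¹ := by rw [h]
        _ = g * z⁻¹ * g⁻¹ := by rw [hkzi]; group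
        _ = z := h2
  have hK2 : ∀ g g' : G, g ∉ K → g' ∉ K → g⁻¹ * g' ∈ K := by
    intro g g' hg hg'
    have h1 := hnotK g hg
    have h2 := hnotK g' hg'
    rw [hmemK]
    have h1' : g⁻¹ * z⁻¹ * g = z := by rw [← h1]; group
    calc g⁻¹ * g' * z * (g⁻¹ * g')⁻¹ = g⁻¹ * (g' * z * g'⁻¹) * g := by group
      _ = g⁻¹ * z⁻¹ * g := by rw [h2]
      _ = z := h1'
  -- z as an element of K, and the subgroup it generates
  set z' : K := ⟨z, hzK⟩ with hz'def
  have hz'o : ¬ IsOfFinOrder z' := fun h => hzo ((Submonoid.isOfFinOrder_coe (x := (⟨z, hzK⟩ : K.toSubmonoid))).mpr h)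
  set Hz : Subgroup K := Subgroup.zpowers z' with hHzdef
  have hHzsub : Hz = N.subgroupOf K := by
    ext x
    rw [Subgroup.mem_subgroupOf, ← hNzpow]
    constructor
    · rintro ⟨k, rfl⟩
      exact ⟨k, by simp [hz'def]⟩
    · rintro ⟨k, hk⟩
      exact ⟨k, by ext; simpa using hk⟩
  haveI hHzfi : Hz.FiniteIndex := by
    rw [hHzsub]
    constructor
    have : N.relIndex K ∣ N.index := Subgroup.relIndex_dvd_index_of_normal N K
    intro h0
    rw [Subgroup.subgroupOf, Subgroup.relIndex] at *
    exact hNfi.index_ne_zero (Nat.eq_zero_of_zero_dvd (h0 ▸ this))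
  -- the transfer homomorphism
  have hz'c : ∀ x : K, x * z' = z' * x := fun x =>
    Subtype.ext (Subgroup.mem_centralizer_singleton_iff.mp x.2)
  have hz'inj : Function.Injective (fun n : ℤ => z' ^ n) :=
    injective_zpow_iff_not_isOfFinOrder.mpr hz'o
  set e : Multiplicative ℤ →* K := zpowersHom K z' with hedef
  have heinj : Function.Injective e := by
    intro m n h
    exact Multiplicative.toAdd.injective (hz'inj h)
  have hrange : e.range = Hz := by
    ext x
    rw [MonoidHom.mem_range, Subgroup.mem_zpowers_iff]
    exact ⟨fun ⟨m, hm⟩ => ⟨m.toAdd, hm⟩, fun ⟨k, hk⟩ => ⟨Multiplicative.ofAdd k, hk⟩⟩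
  set ϕe : (Hz : Subgroup K) ≃* Multiplicative ℤ :=
    (MulEquiv.subgroupCongr hrange).symm.trans (MonoidHom.ofInjective heinj).symm with hϕedef
  set τ : K →* Multiplicative ℤ := MonoidHom.transfer ϕe.toMonoidHom with hτdef
  have hkey : ∀ (g : K) (k : ℕ) (g₀ : K),
      g₀⁻¹ * g ^ k * g₀ ∈ Hz → g₀⁻¹ * g ^ k * g₀ = g ^ k := by
    intro g k g₀ hmem
    obtain ⟨m, hm⟩ := Subgroup.mem_zpowers_iff.mp hmem
    have hcm : g₀ * z' ^ m = z' ^ m * g₀ := (show Commute g₀ z' from hz'c g₀).zpow_right m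
    have h1 : g₀ * z' ^ m * g₀⁻¹ = g ^ k := by rw [hm]; group
    rw [← hm, ← h1, hcm]
    group
  have htau : ∀ g : K, τ g = ϕe ⟨g ^ Hz.index, MonoidHom.transfer_eq_pow_aux g (hkey g)⟩ :=
    fun g => MonoidHom.transfer_eq_pow ϕe.toMonoidHom g (hkey g)
  have hn0 : Hz.index ≠ 0 := hHzfi.index_ne_zero
  -- kernel of transfer = torsion elements of K
  have hker : ∀ g : K, g ∈ τ.ker ↔ IsOfFinOrder g := by
    intro g
    rw [MonoidHom.mem_ker]
    constructor
    · intro hg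
      rw [htau] at hg
      have h1 : (⟨g ^ Hz.index, MonoidHom.transfer_eq_pow_aux g (hkey g)⟩ : Hz) = 1 :=
        ϕe.injective (by rw [hg, map_one])
      have h2 : g ^ Hz.index = 1 := by
        simpa [Subtype.ext_iff] using h1
      exact isOfFinOrder_iff_pow_eq_one.mpr ⟨Hz.index, Nat.pos_of_ne_zero hn0, h2⟩
    · intro hg
      obtain ⟨m, hm0, hm⟩ := isOfFinOrder_iff_pow_eq_one.mp hg
      have h1 : (τ g) ^ m = 1 := by rw [← map_pow, hm, map_one]
      have h2 : m • (τ g).toAdd = 0 := by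
        have := congrArg Multiplicative.toAdd h1
        simpa using this
      have h3 : (τ g).toAdd = 0 := by
        rcases smul_eq_zero.mp h2 with h | h
        · exact absurd h (by exact_mod_cast hm0.ne')
        · exact h
      exact Multiplicative.toAdd.injective h3
  -- the finite normal subgroup F
  set F : Subgroup G := Subgroup.map K.subtype τ.ker with hFdef
  have hmemF : ∀ x : G, x ∈ F ↔ x ∈ K ∧ IsOfFinOrder x := by
    intro x
    constructor
    · rintro ⟨y, hy, rfl⟩
      exact ⟨y.2, Submonoid.isOfFinOrder_coe.mpr ((hker y).mp hy)⟩
    · rintro ⟨hxK, hxo⟩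
      exact ⟨⟨x, hxK⟩, (hker _).mpr (Submonoid.isOfFinOrder_coe.mp hxo), rfl⟩
  haveI hFnorm : F.Normal := by
    constructor
    intro x hx g
    rw [hmemF] at hx ⊢
    obtain ⟨m, hm0, hm⟩ := isOfFinOrder_iff_pow_eq_one.mp hx.2
    exact ⟨hKnorm.conj_mem x hx.1 g,
      isOfFinOrder_iff_pow_eq_one.mpr ⟨m, hm0, by rw [conj_pow, hm]; group⟩⟩
  have hFK : F ≤ K := fun x hx => ((hmemF x).mp hx).1
  have hFfin : Finite F := by
    have hinjF : Function.Injective (fun x : F => ((x : G) : G ⧸ N)) := by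
      intro x y hxy
      have hu : ((x : G))⁻¹ * (y : G) ∈ N := QuotientGroup.eq.mp hxy
      obtain ⟨k, hk⟩ := Subgroup.mem_zpowers_iff.mp (hNzpow ▸ hu : _ ∈ Subgroup.zpowers z)
      have huF : ((x : G))⁻¹ * (y : G) ∈ F := F.mul_mem (F.inv_mem x.2) y.2
      obtain ⟨m, hm0, hm⟩ := isOfFinOrder_iff_pow_eq_one.mp ((hmemF _).mp huF).2
      have hzkm : z ^ (k * (m : ℤ)) = z ^ (0 : ℤ) := by
        rw [zpow_mul, hk, zpow_zero, zpow_natCast, hm]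
      have hk0 : k = 0 := by
        have := hzinj hzkm
        rcases mul_eq_zero.mp this with h | h
        · exact h
        · exact absurd h (by exact_mod_cast hm0.ne')
      have : ((x : G))⁻¹ * (y : G) = 1 := by rw [← hk, hk0, zpow_zero]
      exact Subtype.ext (inv_mul_eq_one.mp this)
    exact Finite.of_injective _ hinjF
  refine ⟨F, hFnorm, hFfin, ?_⟩
  -- now analyze the quotient
  set π : G →* G ⧸ F := QuotientGroup.mk' F with hπdef
  have hπsurj : Function.Surjective π := QuotientGroup.mk'_surjective F
  set A : Subgroup (G ⧸ F) := K.map π with hAdef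
  set ρ : K →* G ⧸ F := π.comp K.subtype with hρdef
  have hkerρ : ρ.ker = τ.ker := by
    ext y
    rw [MonoidHom.mem_ker, hker y]
    constructor
    · intro h
      have h2 : (y : G) ∈ F := (QuotientGroup.eq_one_iff _).mp h
      exact Submonoid.isOfFinOrder_coe.mp ((hmemF _).mp h2).2
    · intro h
      exact (QuotientGroup.eq_one_iff _).mpr
        ((hmemF _).mpr ⟨y.2, Submonoid.isOfFinOrder_coe.mpr h⟩)
  have hρrange : ρ.range = A := by
    rw [hρdef, MonoidHom.range_comp, Subgroup.range_subtype]
  have eA : A ≃* τ.range :=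
    (MulEquiv.subgroupCongr hρrange.symm).trans
      ((QuotientGroup.quotientKerEquivRange ρ).symm.trans
        ((QuotientGroup.quotientMulEquivOfEq hkerρ).trans
          (QuotientGroup.quotientKerEquivRange τ)))
  haveI hAcyc : IsCyclic A := isCyclic_of_surjective eA.symm.toMonoidHom eA.symm.surjective
  obtain ⟨a₀, ha₀⟩ := IsCyclic.exists_generator (α := A)
  set a : G ⧸ F := (a₀ : G ⧸ F) with hadef
  have haA : a ∈ A := a₀.2
  have hagen : ∀ q ∈ A, ∃ k : ℤ, a ^ k = q := by
    intro q hq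
    obtain ⟨k, hk⟩ := Subgroup.mem_zpowers_iff.mp (ha₀ ⟨q, hq⟩)
    exact ⟨k, by simpa [Subtype.ext_iff] using hk⟩
  -- π z has infinite order
  have hπz : ¬ IsOfFinOrder (π z) := by
    intro h
    obtain ⟨m, hm0, hm⟩ := isOfFinOrder_iff_pow_eq_one.mp h
    have h2 : z ^ m ∈ F := (QuotientGroup.eq_one_iff _).mp (by rw [← map_pow] at hm; exact hm)
    obtain ⟨l, hl0, hl⟩ := isOfFinOrder_iff_pow_eq_one.mp ((hmemF _).mp h2).2
    exact hzo (isOfFinOrder_iff_pow_eq_one.mpr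
      ⟨m * l, Nat.mul_pos hm0 hl0, by rw [pow_mul, hl]⟩)
  have hπzA : π z ∈ A := ⟨z, hzK, rfl⟩
  obtain ⟨m, hm⟩ := hagen _ hπzA
  have hm0 : m ≠ 0 := by
    rintro rfl
    rw [zpow_zero] at hm
    exact hπz (hm ▸ IsOfFinOrder.one)
  have hao : ¬ IsOfFinOrder a := fun h => hπz (hm ▸ h.zpow)
  have hainj : Function.Injective (fun n : ℤ => a ^ n) :=
    injective_zpow_iff_not_isOfFinOrder.mpr hao
  by_cases hKall : ∀ g : G, g ∈ K
  · -- quotient is infinite cyclic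
    refine Or.inr (Or.inl (sw_int_aux _ a hao ?_))
    intro q
    obtain ⟨x, rfl⟩ := hπsurj q
    obtain ⟨k, hk⟩ := hagen (π x) ⟨x, hKall x, rfl⟩
    exact ⟨k, hk⟩
  · -- quotient is infinite dihedral
    push_neg at hKall
    obtain ⟨g₀, hg₀⟩ := hKall
    set t : G ⧸ F := π g₀ with htdef
    have htnA : t ∉ A := by
      rintro ⟨x, hxK, hx⟩
      have hx' : (x : G ⧸ F) = (g₀ : G ⧸ F) := hx
      have h2 : x⁻¹ * g₀ ∈ F := QuotientGroup.eq.mp hx'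
      have h3 : x⁻¹ * g₀ ∈ K := hFK h2
      exact hg₀ (by simpa using K.mul_mem hxK h3)
    have hzpA : Subgroup.zpowers a ≤ A := by
      rw [Subgroup.zpowers_le]; exact haA
    have htA : t ∉ Subgroup.zpowers a := fun ht => htnA (hzpA ht)
    have hcover : ∀ q : G ⧸ F, q ∈ Subgroup.zpowers a ∨ t⁻¹ * q ∈ Subgroup.zpowers a := by
      intro q
      obtain ⟨x, rfl⟩ := hπsurj q
      by_cases hx : x ∈ K
      · left
        obtain ⟨k, hk⟩ := hagen (π x) ⟨x, hx, rfl⟩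
        exact ⟨k, hk⟩
      · right
        have h2 : g₀⁻¹ * x ∈ K := hK2 g₀ x hg₀ hx
        have h3 : t⁻¹ * π x = π (g₀⁻¹ * x) := by rw [map_mul, map_inv]
        obtain ⟨k, hk⟩ := hagen _ (⟨g₀⁻¹ * x, h2, rfl⟩ : π (g₀⁻¹ * x) ∈ A)
        exact ⟨k, by show a ^ k = t⁻¹ * π x; rw [hk]; exact h3.symm⟩
    have hinvz : t * π z * t⁻¹ = (π z)⁻¹ := by
      have h := hnotK g₀ hg₀
      calc t * π z * t⁻¹ = π (g₀ * z * g₀⁻¹) := by rw [map_mul, map_mul, map_inv]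
        _ = (π z)⁻¹ := by rw [h, map_inv]
    haveI hAnorm : A.Normal := hKnorm.map π hπsurj
    have htat : t * a * t⁻¹ = a⁻¹ := by
      obtain ⟨s, hs⟩ := hagen _ (hAnorm.conj_mem a haA t)
      have hpow : ∀ k : ℤ, t * a ^ k * t⁻¹ = a ^ (s * k) := by
        intro k
        rw [← conj_zpow, ← hs, ← zpow_mul]
      have h1 : a ^ (s * m) = a ^ (-m) := by
        rw [zpow_neg, hm, ← hinvz, ← hm, hpow m]
      have h2 : s * m = -m := hainj h1
      have hs1 : s = -1 := by
        have h3 : s * m = -1 * m := by rw [h2]; ring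
        exact mul_right_cancel₀ hm0 h3
      rw [hs1] at hs
      rw [← hs, zpow_neg_one]
    have ht2 : t * t = 1 := by
      have hg2K : g₀ * g₀ ∈ K := by
        rw [hmemK]
        have h := hnotK g₀ hg₀
        calc g₀ * g₀ * z * (g₀ * g₀)⁻¹ = g₀ * (g₀ * z * g₀⁻¹) * g₀⁻¹ := by group
          _ = g₀ * z⁻¹ * g₀⁻¹ := by rw [h]
          _ = (g₀ * z * g₀⁻¹)⁻¹ := by group
          _ = z := by rw [h]; group
      have httA : t * t ∈ A := by
        rw [show t * t = π (g₀ * g₀) from (map_mul _ _ _).symm]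
        exact ⟨g₀ * g₀, hg2K, rfl⟩
      obtain ⟨k, hk⟩ := hagen _ httA
      have hconjk : t * a ^ k * t⁻¹ = a ^ (-k) := by
        rw [← conj_zpow, htat, ← zpow_neg_one, ← zpow_mul]
        ring_nf
      have h1 : t * (t * t) * t⁻¹ = t * t := by group
      have h2 : a ^ (-k) = a ^ k := by
        rw [← hconjk, hk, h1]
      have hk0 : k = 0 := by
        have h3 := hainj h2
        omega
      rw [← hk, hk0, zpow_zero]
    exact Or.inr (Or.inr (sw_dihedral_aux _ a t hao ht2 htat htA hcover))
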